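/- The bound |G| ≥ 2^{m+n-2} is tight: for m, n ≥ 1, take Q with q_{mn} = -1 and all other entries 0, and c = 0, d = 0. Then A(Q,0,0) = -1/4 and the set G = {(x,y) ∈ {0,1}^m × {0,1}^n : f(x,y) ≤ A(Q,0,0)} equals {(x,y) : x_m = 1 and y_n = 1}, so |G| = 2^{m+n-2}. -/

import Mathlib

open Finset

/-- The bipartite boolean quadratic objective f(x,y) = xᵀQy + c·x + d·y,
extended to real vectors. -/
noncomputable def fobj (m n : ℕ) (Q : Fin m → Fin n → ℝ) (c : Fin m → ℝ) (d : Fin n → ℝ)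
    (x : Fin m → ℝ) (y : Fin n → ℝ) : ℝ :=
  (∑ i, ∑ j, Q i j * x i * y j) + (∑ i, c i * x i) + (∑ j, d j * y j)

/-- A boolean vector viewed as a real 0-1 vector. -/
def bv {k : ℕ} (x : Fin k → Bool) : Fin k → ℝ := fun i => if x i then 1 else 0

/-- The average of f over all 2^(m+n) boolean pairs (x,y). -/
noncomputable def avgA (m n : ℕ) (Q : Fin m → Fin n → ℝ) (c : Fin m → ℝ) (d : Fin n → ℝ) : ℝ :=
  (∑ x : Fin m → Bool, ∑ y : Fin n → Bool, fobj m n Q c d (bv x) (bv y)) / 2 ^ (m + n)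


lemma card_bit (k : ℕ) (i0 : Fin k) :
    ((Finset.univ : Finset (Fin k → Bool)).filter (fun x => x i0 = true)).card = 2 ^ (k - 1) := by
  rw [← Fintype.card_subtype]
  have e : {x : Fin k → Bool // x i0 = true} ≃ ({j : Fin k // j ≠ i0} → Bool) :=
    { toFun := fun x j => x.1 j.1
      invFun := fun f => ⟨fun j => if h : j = i0 then true else f ⟨j, h⟩, by simp⟩
      left_inv := by
        rintro ⟨x, hx⟩
        ext j
        by_cases h : j = i0
        · subst h; simpa using hx.symm
        · simp [h]
      right_inv := by
        intro f
        ext j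
        simp [j.2] }
  rw [Fintype.card_congr e, Fintype.card_fun]
  have : Fintype.card {j : Fin k // j ≠ i0} = k - 1 := by
    simp [Fintype.card_subtype_compl]
  rw [this, Fintype.card_bool]

lemma sum_bit (k : ℕ) (i0 : Fin k) :
    (∑ x : Fin k → Bool, bv x i0) = 2 ^ (k - 1) := by
  have : (∑ x : Fin k → Bool, bv x i0)
      = ((Finset.univ : Finset (Fin k → Bool)).filter (fun x => x i0 = true)).card := by
    rw [Finset.card_filter]
    push_cast
    refine Finset.sum_congr rfl fun x _ => ?_
    simp [bv]
  rw [this, card_bit]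
  push_cast
  ring

lemma fobj_eq (m n : ℕ) (hm : 0 < m) (hn : 0 < n) (x : Fin m → Bool) (y : Fin n → Bool) :
    fobj m n (fun i j => if i.val = m - 1 ∧ j.val = n - 1 then (-1 : ℝ) else 0)
      (fun _ => 0) (fun _ => 0) (bv x) (bv y)
    = -(bv x ⟨m - 1, Nat.sub_lt hm Nat.one_pos⟩ * bv y ⟨n - 1, Nat.sub_lt hn Nat.one_pos⟩) := by
  set i0 : Fin m := ⟨m - 1, Nat.sub_lt hm Nat.one_pos⟩
  set j0 : Fin n := ⟨n - 1, Nat.sub_lt hn Nat.one_pos⟩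
  have key : ∀ (i : Fin m) (j : Fin n),
      ((if i.val = m - 1 ∧ j.val = n - 1 then (-1 : ℝ) else 0) * bv x i * bv y j)
      = if i = i0 then (if j = j0 then -(bv x i * bv y j) else 0) else 0 := by
    intro i j
    by_cases hi : i = i0
    · by_cases hj : j = j0
      · subst hi; subst hj; simp [i0, j0]
      · have : ¬ j.val = n - 1 := fun h => hj (Fin.ext h)
        simp [hi, hj, this]
    · have : ¬ i.val = m - 1 := fun h => hi (Fin.ext h)
      simp [hi, this]
  simp only [fobj, key, mul_zero, zero_mul, Finset.sum_const_zero, add_zero]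
  have inner : ∀ i : Fin m, (∑ j : Fin n, if i = i0 then (if j = j0 then -(bv x i * bv y j) else 0) else 0)
      = if i = i0 then -(bv x i * bv y j0) else 0 := by
    intro i
    by_cases h : i = i0 <;> simp [h, Finset.sum_ite_eq']
  rw [Finset.sum_congr rfl fun i _ => inner i, Finset.sum_ite_eq' Finset.univ i0,
    if_pos (Finset.mem_univ _)]

lemma avg_eq (m n : ℕ) (hm : 0 < m) (hn : 0 < n) :
    avgA m n (fun i j => if i.val = m - 1 ∧ j.val = n - 1 then (-1 : ℝ) else 0)
      (fun _ => 0) (fun _ => 0) = -1 / 4 := by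
  unfold avgA
  have : (∑ x : Fin m → Bool, ∑ y : Fin n → Bool,
      fobj m n (fun i j => if i.val = m - 1 ∧ j.val = n - 1 then (-1 : ℝ) else 0)
        (fun _ => 0) (fun _ => 0) (bv x) (bv y))
      = -(2 ^ (m - 1) * 2 ^ (n - 1)) := by
    calc (∑ x : Fin m → Bool, ∑ y : Fin n → Bool,
        fobj m n (fun i j => if i.val = m - 1 ∧ j.val = n - 1 then (-1 : ℝ) else 0)
          (fun _ => 0) (fun _ => 0) (bv x) (bv y))
        = ∑ x : Fin m → Bool, ∑ y : Fin n → Bool,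
            -(bv x ⟨m - 1, Nat.sub_lt hm Nat.one_pos⟩ * bv y ⟨n - 1, Nat.sub_lt hn Nat.one_pos⟩) := by
          refine Finset.sum_congr rfl fun x _ => Finset.sum_congr rfl fun y _ => ?_
          exact fobj_eq m n hm hn x y
      _ = -((∑ x : Fin m → Bool, bv x ⟨m - 1, Nat.sub_lt hm Nat.one_pos⟩) *
            (∑ y : Fin n → Bool, bv y ⟨n - 1, Nat.sub_lt hn Nat.one_pos⟩)) := by
          rw [Finset.sum_mul_sum]
          simp
      _ = -(2 ^ (m - 1) * 2 ^ (n - 1)) := by rw [sum_bit, sum_bit]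
  rw [this]
  have h2 : (2 : ℝ) ^ (m + n) = 2 ^ (m - 1) * 2 ^ (n - 1) * 4 := by
    rw [← pow_add]
    have : m + n = (m - 1) + (n - 1) + 2 := by omega
    rw [this, pow_add]
    norm_num
  rw [h2]
  have h1 : (0:ℝ) < 2 ^ (m - 1) := by positivity
  have h3 : (0:ℝ) < 2 ^ (n - 1) := by positivity
  field_simp

theorem dominance_bound_tight (m n : ℕ) (hm : 0 < m) (hn : 0 < n)
    (Q : Fin m → Fin n → ℝ)
    (hQ : Q = fun i j => if i.val = m - 1 ∧ j.val = n - 1 then (-1 : ℝ) else 0) :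
    avgA m n Q (fun _ => 0) (fun _ => 0) = -1 / 4
    ∧
    ((Finset.univ : Finset ((Fin m → Bool) × (Fin n → Bool))).filter
        (fun p => fobj m n Q (fun _ => 0) (fun _ => 0) (bv p.1) (bv p.2)
          ≤ avgA m n Q (fun _ => 0) (fun _ => 0)))
      = ((Finset.univ : Finset ((Fin m → Bool) × (Fin n → Bool))).filter
        (fun p => p.1 ⟨m - 1, by omega⟩ = true ∧ p.2 ⟨n - 1, by omega⟩ = true))
    ∧
    ((Finset.univ : Finset ((Fin m → Bool) × (Fin n → Bool))).filter
        (fun p => fobj m n Q (fun _ => 0) (fun _ => 0) (bv p.1) (bv p.2)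
          ≤ avgA m n Q (fun _ => 0) (fun _ => 0))).card = 2 ^ (m + n - 2) := by
  subst hQ
  have havg := avg_eq m n hm hn
  have hfilter :
      ((Finset.univ : Finset ((Fin m → Bool) × (Fin n → Bool))).filter
        (fun p => fobj m n (fun i j => if i.val = m - 1 ∧ j.val = n - 1 then (-1 : ℝ) else 0)
            (fun _ => 0) (fun _ => 0) (bv p.1) (bv p.2)
          ≤ avgA m n (fun i j => if i.val = m - 1 ∧ j.val = n - 1 then (-1 : ℝ) else 0)
            (fun _ => 0) (fun _ => 0)))
      = ((Finset.univ : Finset ((Fin m → Bool) × (Fin n → Bool))).filter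
        (fun p => p.1 ⟨m - 1, by omega⟩ = true ∧ p.2 ⟨n - 1, by omega⟩ = true)) := by
    refine Finset.filter_congr fun p _ => ?_
    rw [havg, fobj_eq m n hm hn]
    constructor
    · intro h
      by_contra hc
      rw [not_and_or] at hc
      rcases hc with hc | hc
      · simp [bv, Bool.not_eq_true] at h hc ⊢
        rw [hc] at h; norm_num at h
      · simp [bv, Bool.not_eq_true] at h hc ⊢
        rw [hc] at h; norm_num at h
    · rintro ⟨h1, h2⟩
      simp [bv, h1, h2]
      norm_num
  refine ⟨havg, hfilter, ?_⟩
  rw [hfilter]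
  have : ((Finset.univ : Finset ((Fin m → Bool) × (Fin n → Bool))).filter
        (fun p => p.1 ⟨m - 1, by omega⟩ = true ∧ p.2 ⟨n - 1, by omega⟩ = true))
      = ((Finset.univ : Finset (Fin m → Bool)).filter (fun x => x ⟨m - 1, by omega⟩ = true)) ×ˢ
        ((Finset.univ : Finset (Fin n → Bool)).filter (fun y => y ⟨n - 1, by omega⟩ = true)) := by
    ext p
    simp [Finset.mem_product]
  rw [this, Finset.card_product, card_bit, card_bit, ← pow_add]
  congr 1
  omega
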